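/- Truncated Bernoulli–Carlitz numbers via associated Stirling–Carlitz numbers of the second kind: for every integer N ≥ 1 and every n ≥ 1, BC_{N,n} = Π(n) Σ_{k=1}^{n} (n+1 choose k+1) · ((−D_N)^k Π(k)/Π(n + k r^N)) · {n + k r^N brace k}_{C,≥N}. -/

import Mathlib

/-!
Carlitz module: `Fq` is a finite field with `r = Fintype.card Fq` elements (so `r` is a
power of a prime `p`), and `K = Fq(T)` is the field of rational functions over `Fq`.
-/

noncomputable section

variable (Fq : Type*) [Field Fq] [Fintype Fq]

/-- `r`, the number of elements of the finite field `Fq` (a prime power). -/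
def rq : ℕ := Fintype.card Fq

/-- `[i] = T^{r^i} − T` in `K = Fq(T)`. -/
def carlitzBracket (i : ℕ) : RatFunc Fq := RatFunc.X ^ rq Fq ^ i - RatFunc.X

/-- `D_0 = 1`, `D_i = [i]·D_{i−1}^r`. -/
def carlitzD : ℕ → RatFunc Fq
  | 0 => 1
  | i + 1 => carlitzBracket Fq (i + 1) * carlitzD i ^ rq Fq

/-- `L_0 = 1`, `L_i = [i]·L_{i−1}`. -/
def carlitzL : ℕ → RatFunc Fq
  | 0 => 1
  | i + 1 => carlitzBracket Fq (i + 1) * carlitzL i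

/-- The Carlitz factorial `Π(i) = ∏_j D_j^{c_j}`, where `i = Σ_j c_j r^j` with
`0 ≤ c_j < r` is the base-`r` expansion of `i`. -/
def carlitzPi (i : ℕ) : RatFunc Fq :=
  ∏ j ∈ Finset.range (i + 1), carlitzD Fq j ^ (Nat.digits (rq Fq) i).getD j 0

/-- The power series `Σ_{j=0}^∞ (D_N/D_{N+j}) x^{r^{N+j} − r^N}`, i.e.
`(e_C(x) − Σ_{i=0}^{N−1} x^{r^i}/D_i)·D_N/x^{r^N}`; it has constant term `1`. -/
def bcSeries (N : ℕ) : PowerSeries (RatFunc Fq) :=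
  PowerSeries.mk fun m => ∑ j ∈ Finset.range (m + 1),
    if m = rq Fq ^ (N + j) - rq Fq ^ N then carlitzD Fq N / carlitzD Fq (N + j) else 0

/-- The truncated Bernoulli–Carlitz number `BC_{N,n}`: `BC_{N,n}/Π(n)` is the `n`-th
coefficient of the multiplicative inverse of the power series
`Σ_{j=0}^∞ (D_N/D_{N+j}) x^{r^{N+j} − r^N}`. -/
def truncBC (N n : ℕ) : RatFunc Fq :=
  carlitzPi Fq n * PowerSeries.coeff n (bcSeries Fq N)⁻¹

/-- The power series `Σ_{j=0}^∞ (−1)^j (L_N/L_{N+j}) x^{r^{N+j} − r^N}`, i.e.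
`(log_C(x) − Σ_{i=0}^{N−1} (−1)^i x^{r^i}/L_i)·(−1)^N L_N/x^{r^N}`;
it has constant term `1`. -/
def ccSeries (N : ℕ) : PowerSeries (RatFunc Fq) :=
  PowerSeries.mk fun m => ∑ j ∈ Finset.range (m + 1),
    if m = rq Fq ^ (N + j) - rq Fq ^ N then
      (-1) ^ j * carlitzL Fq N / carlitzL Fq (N + j) else 0

/-- The truncated Cauchy–Carlitz number `CC_{N,n}`: `CC_{N,n}/Π(n)` is the `n`-th
coefficient of the multiplicative inverse of the power series
`Σ_{j=0}^∞ (−1)^j (L_N/L_{N+j}) x^{r^{N+j} − r^N}`. -/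
def truncCC (N n : ℕ) : RatFunc Fq :=
  carlitzPi Fq n * PowerSeries.coeff n (ccSeries Fq N)⁻¹

/-- The tail `e_C(z) − 𝓔_{N−1}(z) = Σ_{i=N}^∞ z^{r^i}/D_i` of the Carlitz exponential. -/
def carlitzExpTail (N : ℕ) : PowerSeries (RatFunc Fq) :=
  PowerSeries.mk fun m => ∑ j ∈ Finset.range (m + 1),
    if m = rq Fq ^ (N + j) then (carlitzD Fq (N + j))⁻¹ else 0

/-- The associated Stirling–Carlitz number of the second kind `{n brace k}_{C,≥N}`,
defined by `(e_C(z) − 𝓔_{N−1}(z))^k/Π(k) = Σ_n {n brace k}_{C,≥N} z^n/Π(n)`. -/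
def stirling2C (N k n : ℕ) : RatFunc Fq :=
  carlitzPi Fq n / carlitzPi Fq k * PowerSeries.coeff n (carlitzExpTail Fq N ^ k)

/-- The tail `log_C(z) − 𝓕_{N−1}(z) = Σ_{i=N}^∞ (−1)^i z^{r^i}/L_i` of the Carlitz
logarithm. -/
def carlitzLogTail (N : ℕ) : PowerSeries (RatFunc Fq) :=
  PowerSeries.mk fun m => ∑ j ∈ Finset.range (m + 1),
    if m = rq Fq ^ (N + j) then (-1) ^ (N + j) * (carlitzL Fq (N + j))⁻¹ else 0

/-- The associated Stirling–Carlitz number of the first kind `{n brack k}_{C,≥N}`,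
defined by `(log_C(z) − 𝓕_{N−1}(z))^k/Π(k) = Σ_n {n brack k}_{C,≥N} z^n/Π(n)`. -/
def stirling1C (N k n : ℕ) : RatFunc Fq :=
  carlitzPi Fq n / carlitzPi Fq k * PowerSeries.coeff n (carlitzLogTail Fq N ^ k)

lemma two_le_rq : 2 ≤ rq Fq := Fintype.one_lt_card

lemma carlitzBracket_ne_zero (i : ℕ) (hi : 1 ≤ i) : carlitzBracket Fq i ≠ 0 := by
  have h2 : 2 ≤ rq Fq ^ i := le_trans (two_le_rq Fq) (Nat.le_self_pow (by omega) _)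
  have hp : (Polynomial.X ^ rq Fq ^ i - Polynomial.X : Polynomial Fq) ≠ 0 := by
    intro h
    have := congrArg (Polynomial.coeff · (rq Fq ^ i)) h
    simp [Polynomial.coeff_X] at this
    rw [if_neg (by omega)] at this
    norm_num at this
  have := RatFunc.algebraMap_ne_zero (K := Fq) hp
  rwa [map_sub, map_pow, RatFunc.algebraMap_X] at this

lemma carlitzD_ne_zero (i : ℕ) : carlitzD Fq i ≠ 0 := by
  induction i with
  | zero => simp [carlitzD]
  | succ i ih =>
    simp only [carlitzD]
    exact mul_ne_zero (carlitzBracket_ne_zero Fq (i + 1) (by omega)) (pow_ne_zero _ ih)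

lemma carlitzPi_ne_zero (i : ℕ) : carlitzPi Fq i ≠ 0 :=
  Finset.prod_ne_zero_iff.mpr fun j _ => pow_ne_zero _ (carlitzD_ne_zero Fq j)

lemma pow_fact (N j : ℕ) : j + rq Fq ^ N ≤ rq Fq ^ (N + j) := by
  have h1 : j + 1 ≤ rq Fq ^ j := by
    have := Nat.lt_pow_self (lt_of_lt_of_le one_lt_two (two_le_rq Fq)) (n := j)
    omega
  have h2 : 1 ≤ rq Fq ^ N := Nat.one_le_pow _ _ (by have := two_le_rq Fq; omega)
  calc j + rq Fq ^ N ≤ rq Fq ^ N * (j + 1) := by nlinarith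
  _ ≤ rq Fq ^ N * rq Fq ^ j := Nat.mul_le_mul_left _ h1
  _ = rq Fq ^ (N + j) := by rw [← pow_add]

lemma bc_const (N : ℕ) : PowerSeries.constantCoeff (bcSeries Fq N) = 1 := by
  rw [← PowerSeries.coeff_zero_eq_constantCoeff_apply]
  simp only [bcSeries, PowerSeries.coeff_mk]
  rw [Finset.sum_range_one, if_pos (by simp)]
  simp [div_self (carlitzD_ne_zero Fq N)]

lemma tail_eq (N : ℕ) : carlitzExpTail Fq N =
    bcSeries Fq N * PowerSeries.C (carlitzD Fq N)⁻¹
      * PowerSeries.X ^ (rq Fq ^ N) := by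
  ext m
  rw [PowerSeries.coeff_mul_X_pow']
  simp only [carlitzExpTail, bcSeries, PowerSeries.coeff_mul_C, PowerSeries.coeff_mk]
  by_cases ha : rq Fq ^ N ≤ m
  · rw [if_pos ha, Finset.sum_mul]
    rw [Finset.sum_subset (Finset.range_subset_range.mpr (by omega : m - rq Fq ^ N + 1 ≤ m + 1))
      (fun j _ hj => ?_)]
    · refine Finset.sum_congr rfl fun j _ => ?_
      have hle : rq Fq ^ N ≤ rq Fq ^ (N + j) := le_trans (by omega) (pow_fact Fq N j)
      have hD := carlitzD_ne_zero Fq N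
      have hDj := carlitzD_ne_zero Fq (N + j)
      by_cases hc : m = rq Fq ^ (N + j)
      · rw [if_pos hc, if_pos (by omega : m - rq Fq ^ N = rq Fq ^ (N + j) - rq Fq ^ N)]
        field_simp
      · rw [if_neg hc, if_neg (by omega : ¬ m - rq Fq ^ N = rq Fq ^ (N + j) - rq Fq ^ N),
          zero_mul]
    · rw [if_neg, zero_mul]
      intro hc
      have := pow_fact Fq N j
      simp only [Finset.mem_range] at hj
      omega
  · rw [if_neg ha]
    refine Finset.sum_eq_zero fun j _ => ?_
    rw [if_neg]
    intro hc
    have hle : rq Fq ^ N ≤ rq Fq ^ (N + j) := le_trans (by omega) (pow_fact Fq N j)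
    omega

lemma coeff_inv_eq_sum (f : PowerSeries (RatFunc Fq))
    (hf : PowerSeries.constantCoeff f = 1) (n : ℕ) (hn : 1 ≤ n) :
    PowerSeries.coeff n f⁻¹ =
      ∑ k ∈ Finset.Icc 1 n, (-1) ^ k * ((n + 1).choose (k + 1) : RatFunc Fq) *
        PowerSeries.coeff n (f ^ k) := by
  have hb : (1 - f) ^ (n + 1)
      = ∑ m ∈ Finset.range (n + 2), (-f) ^ m * 1 ^ (n + 1 - m)
          * ((n + 1).choose m : PowerSeries (RatFunc Fq)) := by
    rw [(by ring : (1 : PowerSeries (RatFunc Fq)) - f = -f + 1), add_pow]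
  have hS : f * (∑ k ∈ Finset.range (n + 1),
      PowerSeries.C ((-1) ^ k * ((n + 1).choose (k + 1) : RatFunc Fq)) * f ^ k)
      = 1 - (1 - f) ^ (n + 1) := by
    rw [Finset.mul_sum, hb]
    conv_rhs => rw [Finset.sum_range_succ']
    have hterm : ∀ k ∈ Finset.range (n + 1),
        f * (PowerSeries.C ((-1) ^ k * ((n + 1).choose (k + 1) : RatFunc Fq)) * f ^ k)
          = -((-f) ^ (k + 1) * 1 ^ (n + 1 - (k + 1))
              * ((n + 1).choose (k + 1) : PowerSeries (RatFunc Fq))) := by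
      intro k _
      have hc : PowerSeries.C ((-1) ^ k * ((n + 1).choose (k + 1) : RatFunc Fq))
          = (-1) ^ k * ((n + 1).choose (k + 1) : PowerSeries (RatFunc Fq)) := by
        simp [map_mul, map_pow]
      rw [hc, neg_pow f]
      ring
    rw [Finset.sum_congr rfl hterm]
    simp only [pow_zero, one_mul, Nat.choose_zero_right, Nat.cast_one, mul_one]
    rw [Finset.sum_neg_distrib, one_pow]
    abel
  have hu : f⁻¹ * f = 1 := PowerSeries.inv_mul_cancel f (by rw [hf]; exact one_ne_zero)
  have hS2 : (∑ k ∈ Finset.range (n + 1),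
      PowerSeries.C ((-1) ^ k * ((n + 1).choose (k + 1) : RatFunc Fq)) * f ^ k)
      = f⁻¹ - f⁻¹ * (1 - f) ^ (n + 1) := by
    calc (∑ k ∈ Finset.range (n + 1),
        PowerSeries.C ((-1) ^ k * ((n + 1).choose (k + 1) : RatFunc Fq)) * f ^ k)
        = (f⁻¹ * f) * (∑ k ∈ Finset.range (n + 1),
            PowerSeries.C ((-1) ^ k * ((n + 1).choose (k + 1) : RatFunc Fq)) * f ^ k) := by
          rw [hu, one_mul]
    _ = f⁻¹ * (f * (∑ k ∈ Finset.range (n + 1),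
          PowerSeries.C ((-1) ^ k * ((n + 1).choose (k + 1) : RatFunc Fq)) * f ^ k)) := by
          ring
    _ = f⁻¹ * (1 - (1 - f) ^ (n + 1)) := by rw [hS]
    _ = f⁻¹ - f⁻¹ * (1 - f) ^ (n + 1) := by ring
  have h0 : PowerSeries.coeff n (f⁻¹ * (1 - f) ^ (n + 1)) = 0 := by
    have hXd : (PowerSeries.X : PowerSeries (RatFunc Fq)) ^ (n + 1) ∣ f⁻¹ * (1 - f) ^ (n + 1) :=
      Dvd.dvd.mul_left (pow_dvd_pow_of_dvd (PowerSeries.X_dvd_iff.mpr (by simp [hf])) _) _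
    exact PowerSeries.X_pow_dvd_iff.mp hXd n (by omega)
  have hcoeff := congrArg (PowerSeries.coeff n) hS2
  rw [map_sub, h0, sub_zero, map_sum] at hcoeff
  rw [← hcoeff]
  have hins : Finset.range (n + 1) = insert 0 (Finset.Icc 1 n) := by
    ext x; simp [Finset.mem_range, Finset.mem_Icc]; omega
  rw [hins, Finset.sum_insert (by simp)]
  simp only [PowerSeries.coeff_C_mul]
  have h1 : PowerSeries.coeff n (1 : PowerSeries (RatFunc Fq)) = 0 := by
    rw [PowerSeries.coeff_one, if_neg (by omega)]
  simp only [pow_zero, one_mul, h1, mul_zero, zero_add]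

lemma coeff_tail_pow (N n k : ℕ) :
    PowerSeries.coeff (n + k * rq Fq ^ N) (carlitzExpTail Fq N ^ k)
      = PowerSeries.coeff n (bcSeries Fq N ^ k) * ((carlitzD Fq N)⁻¹) ^ k := by
  rw [tail_eq, mul_pow, mul_pow, ← pow_mul, (by ring : rq Fq ^ N * k = k * rq Fq ^ N),
    PowerSeries.coeff_mul_X_pow, ← map_pow, PowerSeries.coeff_mul_C]

/-- truncated Bernoulli–Carlitz numbers via associated Stirling–Carlitz
numbers of the second kind. -/
theorem truncBC_eq_sum_stirling2C (N n : ℕ) (hN : 1 ≤ N) (hn : 1 ≤ n) :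
    truncBC Fq N n =
      carlitzPi Fq n * ∑ k ∈ Finset.Icc 1 n,
        ((n + 1).choose (k + 1) : RatFunc Fq) *
          ((-carlitzD Fq N) ^ k * carlitzPi Fq k / carlitzPi Fq (n + k * rq Fq ^ N)) *
          stirling2C Fq N k (n + k * rq Fq ^ N) := by
  rw [truncBC, coeff_inv_eq_sum Fq _ (bc_const Fq N) n hn]
  congr 1
  refine Finset.sum_congr rfl fun k hk => ?_
  rw [stirling2C, coeff_tail_pow]
  have hM := carlitzPi_ne_zero Fq (n + k * rq Fq ^ N)
  have hk0 := carlitzPi_ne_zero Fq k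
  have hD := carlitzD_ne_zero Fq N
  rw [inv_pow]
  field_simp
  ring

end
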